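/- Let u≥3 be odd, ζ=e^{πi/(6u)}, and K=ℚ(ζ)⊂ℂ. Then every entry 𝒮ᵘ_{λ,λ′} with λ,λ′∈P⁺ᵘ lies in K; there is a unique field automorphism σ of K with σ(ζ)=ζ^{3u+2}; and for all λ,λ′∈P⁺ᵘ: σ(𝒮ᵘ_{λ,λ′}) = (i/(√3·u))·Σ_{w∈S₃}det(w)·e^{−4πi⟨w(λ̄+ρ),λ̄′+ρ⟩/u} = e^{−2πi(j_λ+j_{λ′}−u/3)}·S^{BP}_{λ,λ′}. (The Bershadsky–Polyakov S-matrix is, up to an explicit phase, a Galois conjugate of the level-(u−3) sl₃ WZW S-matrix.) -/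

import Mathlib

noncomputable section

open Complex IntermediateField

/-- The six elements of the Weyl group `S₃` of sl₃ acting on weights in
Dynkin-label coordinates: `id, w₁, w₂, w₁w₂, w₂w₁, w₃`. -/
def wmap (w : Fin 6) (x : ℂ × ℂ) : ℂ × ℂ :=
  ![x, (-x.1, x.1 + x.2), (x.1 + x.2, -x.2), (-x.1 - x.2, x.1),
    (x.2, -x.1 - x.2), (-x.2, -x.1)] w

/-- The signs of the six Weyl group elements. -/
def wdet : Fin 6 → ℤ := ![1, -1, -1, 1, 1, -1]

/-- The normalised invariant bilinear form of sl₃ in Dynkin-label coordinates. -/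
def bform (x y : ℂ × ℂ) : ℂ :=
  (2 * x.1 * y.1 + x.1 * y.2 + x.2 * y.1 + 2 * x.2 * y.2) / 3

/-- The Weyl vector `ρ = (1,1)`. -/
def rho : ℂ × ℂ := (1, 1)

/-- The set `P⁺ᵘ` of triples of nonnegative integers summing to `u-3`. -/
def Pplus (u : ℕ) : Finset (ℕ × ℕ × ℕ) :=
  (Finset.range u ×ˢ Finset.range u ×ˢ Finset.range u).filter
    (fun l => l.1 + l.2.1 + l.2.2 = u - 3)

/-- The finite part `λ̄ = (λ₁,λ₂)` of a triple `λ = (λ₀,λ₁,λ₂)`. -/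
def bar (l : ℕ × ℕ × ℕ) : ℂ × ℂ := ((l.2.1 : ℂ), (l.2.2 : ℂ))

/-- `j_λ = -(λ₁-λ₂)/3`. -/
def jBP (l : ℕ × ℕ × ℕ) : ℂ := -(((l.2.1 : ℂ) - (l.2.2 : ℂ)) / 3)

/-- The level-`(u-3)` sl₃ WZW S-matrix entry `𝒮ᵘ_{λ,λ′}`. -/
def ScalP (u : ℕ) (l l' : ℕ × ℕ × ℕ) : ℂ :=
  (-I / (Real.sqrt 3 * u)) *
    ∑ w : Fin 6, (wdet w : ℂ) *
      exp (-2 * Real.pi * I * bform (wmap w (bar l + rho)) (bar l' + rho) / u)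

/-- The Galois transform `G_{λ,λ′} = (i/(√3·u))·Σ_{w∈S₃}det(w)·e^{-4πi⟨w(λ̄+ρ),λ̄′+ρ⟩/u}`. -/
def Gmat (u : ℕ) (l l' : ℕ × ℕ × ℕ) : ℂ :=
  (I / (Real.sqrt 3 * u)) *
    ∑ w : Fin 6, (wdet w : ℂ) *
      exp (-4 * Real.pi * I * bform (wmap w (bar l + rho)) (bar l' + rho) / u)

/-- The Bershadsky–Polyakov minimal-model S-matrix. -/
def SBP (u : ℕ) (l l' : ℕ × ℕ × ℕ) : ℂ :=
  exp (2 * Real.pi * I * (jBP l + jBP l' - (u : ℂ) / 3)) * Gmat u l l'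

/-- The primitive `12u`-th root of unity `ζ = e^{πi/(6u)}`. -/
def zeta (u : ℕ) : ℂ := exp (Real.pi * I / (6 * u))

/-- The cyclotomic field `K = ℚ(ζ) ⊆ ℂ`. -/
def Kfield (u : ℕ) : IntermediateField ℚ ℂ := ℚ⟮zeta u⟯

/-- `ζ` as an element of `K`. -/
def zetaK (u : ℕ) : Kfield u :=
  ⟨zeta u, IntermediateField.mem_adjoin_simple_self ℚ (zeta u)⟩

/-! ### Auxiliary definitions and lemmas -/

/-- Integer version of `wmap`. -/
def zwmap (w : Fin 6) (x : ℤ × ℤ) : ℤ × ℤ :=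
  ![x, (-x.1, x.1 + x.2), (x.1 + x.2, -x.2), (-x.1 - x.2, x.1),
    (x.2, -x.1 - x.2), (-x.2, -x.1)] w

/-- Integer version of `3 * bform`. -/
def zform (x y : ℤ × ℤ) : ℤ :=
  2 * x.1 * y.1 + x.1 * y.2 + x.2 * y.1 + 2 * x.2 * y.2

/-- The integer `3·⟨w(λ̄+ρ), λ̄′+ρ⟩`. -/
def nInt (l l' : ℕ × ℕ × ℕ) (w : Fin 6) : ℤ :=
  zform (zwmap w ((l.2.1 : ℤ) + 1, (l.2.2 : ℤ) + 1)) ((l'.2.1 : ℤ) + 1, (l'.2.2 : ℤ) + 1)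

lemma my_cons_val_five {α : Type*} {m : ℕ} (x : α) (u : Fin (m+5) → α) :
    Matrix.vecCons x u 5 =
      Matrix.vecHead (Matrix.vecTail (Matrix.vecTail (Matrix.vecTail (Matrix.vecTail u)))) :=
  rfl

lemma bform_int (l l' : ℕ × ℕ × ℕ) (w : Fin 6) :
    ((nInt l l' w : ℤ) : ℂ) = 3 * bform (wmap w (bar l + rho)) (bar l' + rho) := by
  fin_cases w <;>
    simp [nInt, zform, zwmap, bform, wmap, bar, rho, Prod.fst_add, Prod.snd_add,
      my_cons_val_five] <;>
    push_cast <;> ring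

lemma zeta_zpow (u : ℕ) (k : ℤ) : zeta u ^ k = exp (k * (Real.pi * I / (6 * u))) := by
  rw [zeta, ← Complex.exp_int_mul]

lemma zeta_prim (u : ℕ) (hu : u ≠ 0) : IsPrimitiveRoot (zeta u) (12 * u) := by
  have h := Complex.isPrimitiveRoot_exp (12 * u) (by simp [hu])
  convert h using 2
  have h6 : (u : ℂ) ≠ 0 := Nat.cast_ne_zero.mpr hu
  rw [zeta]
  congr 1
  push_cast
  rw [div_eq_div_iff (mul_ne_zero (by norm_num) h6) (mul_ne_zero (by norm_num) h6)]
  ring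

lemma zeta_ne_zero (u : ℕ) : zeta u ≠ 0 := Complex.exp_ne_zero _

lemma zeta_12u (u : ℕ) (hu : u ≠ 0) : zeta u ^ (12 * (u : ℤ)) = 1 := by
  have : (12 * (u:ℤ)) = ((12 * u : ℕ) : ℤ) := by push_cast; ring
  rw [this, zpow_natCast]; exact (zeta_prim u hu).pow_eq_one

lemma zeta_mod (u : ℕ) (hu : u ≠ 0) (k m t : ℤ) (ht : k = m + 12 * u * t) :
    zeta u ^ k = zeta u ^ m := by
  rw [ht, zpow_add₀ (zeta_ne_zero u), zpow_mul, zeta_12u u hu, one_zpow, mul_one]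

lemma exp_term2 (u : ℕ) (hu : (u : ℂ) ≠ 0) (n : ℤ) (c : ℂ) (hn : (n : ℂ) = 3 * c) :
    exp (-2 * Real.pi * I * c / u) = zeta u ^ (-4 * n) := by
  rw [zeta_zpow]
  congr 1
  field_simp
  push_cast; rw [hn]
  ring

lemma exp_term4 (u : ℕ) (hu : (u : ℂ) ≠ 0) (n : ℤ) (c : ℂ) (hn : (n : ℂ) = 3 * c) :
    exp (-4 * Real.pi * I * c / u) = zeta u ^ (-8 * n) := by
  rw [zeta_zpow]
  congr 1
  field_simp
  push_cast; rw [hn]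
  ring

lemma sqrt3I (u : ℕ) (hu : (u : ℂ) ≠ 0) :
    zeta u ^ (2 * (u : ℤ)) - zeta u ^ (-(2 * (u : ℤ))) = (Real.sqrt 3 : ℂ) * I := by
  rw [zeta_zpow, zeta_zpow]
  have h1 : ((2 * (u : ℤ) : ℤ) : ℂ) * (Real.pi * I / (6 * u)) = ((Real.pi / 3 : ℝ) : ℂ) * I := by
    push_cast
    field_simp
    ring
  have h2 : ((-(2 * (u : ℤ)) : ℤ) : ℂ) * (Real.pi * I / (6 * u))
      = -(((Real.pi / 3 : ℝ) : ℂ) * I) := by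
    push_cast
    field_simp
    ring
  rw [h1, h2, Complex.exp_mul_I, ← neg_mul, Complex.exp_mul_I]
  rw [Complex.cos_neg, Complex.sin_neg]
  rw [← Complex.ofReal_sin, Real.sin_pi_div_three]
  push_cast
  ring

lemma sqrt3_sq : ((Real.sqrt 3 : ℝ) : ℂ) * ((Real.sqrt 3 : ℝ) : ℂ) = 3 := by
  rw [← Complex.ofReal_mul, Real.mul_self_sqrt (by norm_num)]
  norm_num

lemma coprime_aux (u : ℕ) (hodd : Odd u) : Nat.Coprime (3 * u + 2) (12 * u) := by
  obtain ⟨k, hk⟩ := hodd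
  have c2 : Nat.Coprime (3 * u + 2) 2 :=
    (Nat.prime_two.coprime_iff_not_dvd.mpr (by omega)).symm
  have c3 : Nat.Coprime (3 * u + 2) 3 :=
    (Nat.prime_three.coprime_iff_not_dvd.mpr (by omega)).symm
  have cu : Nat.Coprime (3 * u + 2) u := by
    have : Nat.Coprime (2 + u * 3) u :=
      (Nat.coprime_add_mul_left_left 2 u 3).mpr
        (Nat.prime_two.coprime_iff_not_dvd.mpr (by omega))
    simpa [Nat.add_comm, Nat.mul_comm] using this
  have h12 : Nat.Coprime (3 * u + 2) 12 := by
    have : (12 : ℕ) = 2 * (2 * 3) := by norm_num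
    rw [this]
    exact (c2.mul_right (c2.mul_right c3))
  exact h12.mul_right cu

lemma zeta_int (u : ℕ) (hu : u ≠ 0) : IsIntegral ℚ (zeta u) :=
  ((zeta_prim u hu).isIntegral (by positivity)).tower_top

/-- A power basis of `K` over `ℚ` with generator `ζ`. -/
def kpb (u : ℕ) (hu : u ≠ 0) : PowerBasis ℚ (Kfield u) :=
  IntermediateField.adjoin.powerBasis (zeta_int u hu)

lemma kpb_gen (u : ℕ) (hu : u ≠ 0) : (kpb u hu).gen = zetaK u := rfl

lemma sigma_exists (u : ℕ) (hu : u ≠ 0) (hodd : Odd u) :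
    ∃! σ : Kfield u ≃ₐ[ℚ] Kfield u, σ (zetaK u) = zetaK u ^ (3 * u + 2) := by
  have hpos : 0 < 12 * u := by omega
  have hprim' : IsPrimitiveRoot (zeta u ^ (3 * u + 2)) (12 * u) :=
    (zeta_prim u hu).pow_of_coprime _ (coprime_aux u hodd)
  have hroot : Polynomial.aeval (zetaK u ^ (3 * u + 2)) (minpoly ℚ (kpb u hu).gen) = 0 := by
    have hval : ((Kfield u).val) (Polynomial.aeval (zetaK u ^ (3 * u + 2))
        (minpoly ℚ (kpb u hu).gen)) =
        Polynomial.aeval ((zeta u) ^ (3 * u + 2)) (minpoly ℚ (kpb u hu).gen) := by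
      rw [← Polynomial.aeval_algHom_apply]
      congr 1
    have hmin : minpoly ℚ (kpb u hu).gen = Polynomial.cyclotomic (12 * u) ℚ := by
      rw [kpb_gen]
      have : minpoly ℚ (zetaK u) = minpoly ℚ (zeta u) := by
        rw [← IntermediateField.minpoly_gen ℚ (zeta u)]
        rfl
      rw [this, ← Polynomial.cyclotomic_eq_minpoly_rat (zeta_prim u hu) hpos]
    have : Polynomial.aeval ((zeta u) ^ (3 * u + 2)) (minpoly ℚ (kpb u hu).gen) = 0 := by
      rw [hmin, Polynomial.aeval_def, ← Polynomial.eval_map, Polynomial.map_cyclotomic]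
      exact hprim'.isRoot_cyclotomic hpos
    apply_fun ((Kfield u).val) using (Kfield u).val.injective
    rw [hval, this, map_zero]
  have : FiniteDimensional ℚ (Kfield u) := (kpb u hu).finite
  let f : Kfield u →ₐ[ℚ] Kfield u := (kpb u hu).lift (zetaK u ^ (3 * u + 2)) hroot
  have hfgen : f (zetaK u) = zetaK u ^ (3 * u + 2) := by
    have := (kpb u hu).lift_gen (zetaK u ^ (3 * u + 2)) hroot
    rwa [kpb_gen] at this
  have hfbij : Function.Bijective f := by
    have hinj : Function.Injective f := f.toRingHom.injective
    exact ⟨hinj, LinearMap.injective_iff_surjective.mp hinj⟩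
  refine ⟨AlgEquiv.ofBijective f hfbij, hfgen, ?_⟩
  intro τ hτ
  have : (τ : Kfield u →ₐ[ℚ] Kfield u)
      = (AlgEquiv.ofBijective f hfbij : Kfield u →ₐ[ℚ] Kfield u) := by
    apply (kpb u hu).algHom_ext
    rw [kpb_gen]
    show τ (zetaK u) = _
    rw [hτ]
    exact (hfgen).symm
  exact AlgEquiv.coe_algHom_injective this

lemma main_aux (u : ℕ) (hu0 : u ≠ 0) (hodd : Odd u) (l l' : ℕ × ℕ × ℕ) :
    ∃ sK : Kfield u, (sK : ℂ) = ScalP u l l' ∧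
      ∀ σ : Kfield u ≃ₐ[ℚ] Kfield u, σ (zetaK u) = zetaK u ^ (3 * u + 2) →
        ((σ sK : ℂ) = Gmat u l l') := by
  have hu : (u : ℂ) ≠ 0 := Nat.cast_ne_zero.mpr hu0
  set z := zeta u with hzdef
  set zK := zetaK u with hzKdef
  set n : Fin 6 → ℤ := nInt l l' with hndef
  set sK : Kfield u :=
    (-(zK ^ (2 * (u : ℤ)) - zK ^ (-(2 * (u : ℤ)))) / ((3 * u : ℕ) : Kfield u)) *
      ∑ w : Fin 6, ((wdet w : ℤ) : Kfield u) * zK ^ (-4 * n w) with hsKdef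
  have hval : ∀ x : Kfield u, (x : ℂ) = (Kfield u).val x := fun _ => rfl
  have hvz : (Kfield u).val zK = z := rfl
  refine ⟨sK, ?_, ?_⟩
  · rw [hval, hsKdef]
    simp only [map_mul, map_div₀, map_neg, map_sub, map_zpow₀, map_sum, map_intCast,
      map_natCast, hvz]
    rw [ScalP]
    congr 1
    · rw [sqrt3I u hu]
      push_cast
      field_simp
      linear_combination (-1 : ℂ) * sqrt3_sq
    · refine Finset.sum_congr rfl fun w _ => ?_
      congr 1
      rw [exp_term2 u hu (n w) _ (bform_int l l' w)]
  · intro σ hσ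
    have hσz : σ zK = zK ^ ((3 * u + 2 : ℕ) : ℤ) := by
      rw [hσ, zpow_natCast]
    rw [hval, hsKdef]
    simp only [map_mul, map_div₀, map_neg, map_sub, map_zpow₀, map_sum, map_intCast,
      map_natCast, hσz, ← zpow_mul, hvz]
    obtain ⟨k, hk⟩ := hodd
    have e1 : z ^ (((3 * u + 2 : ℕ) : ℤ) * (2 * (u : ℤ))) = z ^ (-(2 * (u : ℤ))) := by
      apply zeta_mod u hu0 _ _ (k + 1)
      push_cast
      rw [hk]
      push_cast
      ring
    have e2 : z ^ (((3 * u + 2 : ℕ) : ℤ) * (-(2 * (u : ℤ)))) = z ^ (2 * (u : ℤ)) := by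
      apply zeta_mod u hu0 _ _ (-(k + 1))
      push_cast
      rw [hk]
      push_cast
      ring
    have e3 : ∀ w : Fin 6, z ^ (((3 * u + 2 : ℕ) : ℤ) * (-4 * n w)) = z ^ (-8 * n w) := by
      intro w
      apply zeta_mod u hu0 _ _ (-(n w))
      push_cast
      ring
    rw [e1, e2]
    rw [Gmat]
    congr 1
    · rw [neg_sub, sqrt3I u hu]
      push_cast
      field_simp
      linear_combination sqrt3_sq
    · refine Finset.sum_congr rfl fun w _ => ?_
      rw [e3 w]
      congr 1
      rw [exp_term4 u hu (n w) _ (bform_int l l' w)]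

/-- For odd `u ≥ 3`: every S-matrix entry `𝒮ᵘ_{λ,λ′}` lies in `K = ℚ(ζ)`;
there is a unique automorphism `σ` of `K` with `σ(ζ) = ζ^{3u+2}`; and
`σ(𝒮ᵘ_{λ,λ′}) = (i/(√3·u))·Σ_{w∈S₃}det(w)·e^{-4πi⟨w(λ̄+ρ),λ̄′+ρ⟩/u}
= e^{-2πi(j_λ+j_{λ′}-u/3)}·S^{BP}_{λ,λ′}`. -/
theorem stmt8 (u : ℕ) (hu : 3 ≤ u) (hodd : Odd u) :
    (∀ l ∈ Pplus u, ∀ l' ∈ Pplus u, ScalP u l l' ∈ Kfield u) ∧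
    (∃! σ : Kfield u ≃ₐ[ℚ] Kfield u, σ (zetaK u) = zetaK u ^ (3 * u + 2)) ∧
    (∀ σ : Kfield u ≃ₐ[ℚ] Kfield u, σ (zetaK u) = zetaK u ^ (3 * u + 2) →
      ∀ l ∈ Pplus u, ∀ l' ∈ Pplus u, ∀ s : Kfield u, (s : ℂ) = ScalP u l l' →
        ((σ s : ℂ) = Gmat u l l' ∧
          Gmat u l l'
            = exp (-2 * Real.pi * I * (jBP l + jBP l' - (u : ℂ) / 3)) * SBP u l l')) := by
  have hu0 : u ≠ 0 := by omega
  refine ⟨?_, sigma_exists u hu0 hodd, ?_⟩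
  · intro l _ l' _
    obtain ⟨sK, hsK, -⟩ := main_aux u hu0 hodd l l'
    rw [← hsK]
    exact sK.2
  · intro σ hσ l _ l' _ s hs
    obtain ⟨sK, hsK, hσK⟩ := main_aux u hu0 hodd l l'
    have hssK : s = sK := Subtype.ext (hs.trans hsK.symm)
    refine ⟨by rw [hssK]; exact hσK σ hσ, ?_⟩
    have h : (-2 * (Real.pi : ℂ) * I * (jBP l + jBP l' - (u : ℂ) / 3))
        + (2 * (Real.pi : ℂ) * I * (jBP l + jBP l' - (u : ℂ) / 3)) = 0 := by ring
    rw [SBP, ← mul_assoc, ← Complex.exp_add, h, Complex.exp_zero, one_mul]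

end
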